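/- For any λ ∈ (0, 1], the function x ↦ sin(λx/2)/(λ·sin(x/2)) is monotone increasing on (0, π/2). -/

import Mathlib

open Real

private lemma hasDerivAt_num (l t : ℝ) :
    HasDerivAt (fun t => Real.sin (l * t / 2)) (Real.cos (l * t / 2) * (l / 2)) t := by
  have h1 : HasDerivAt (fun t : ℝ => l * t / 2) (l / 2) t := by
    simpa using ((hasDerivAt_id t).const_mul l).div_const 2
  exact (Real.hasDerivAt_sin _).comp t h1

private lemma hasDerivAt_den (l t : ℝ) :
    HasDerivAt (fun t => l * Real.sin (t / 2)) (l * (Real.cos (t / 2) * (1 / 2))) t := by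
  have h2 : HasDerivAt (fun t : ℝ => t / 2) (1 / 2 : ℝ) t := (hasDerivAt_id t).div_const 2
  exact ((Real.hasDerivAt_sin _).comp t h2).const_mul l

private lemma hasDerivAt_g (l t : ℝ) :
    HasDerivAt (fun t => l * Real.cos (l * t / 2) * Real.sin (t / 2)
        - Real.sin (l * t / 2) * Real.cos (t / 2))
      ((1 - l ^ 2) / 2 * (Real.sin (l * t / 2) * Real.sin (t / 2))) t := by
  have h1 : HasDerivAt (fun t : ℝ => l * t / 2) (l / 2) t := by
    simpa using ((hasDerivAt_id t).const_mul l).div_const 2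
  have h2 : HasDerivAt (fun t : ℝ => t / 2) (1 / 2 : ℝ) t := (hasDerivAt_id t).div_const 2
  have hcl : HasDerivAt (fun t => Real.cos (l * t / 2)) (-Real.sin (l * t / 2) * (l / 2)) t :=
    (Real.hasDerivAt_cos _).comp t h1
  have hsl : HasDerivAt (fun t => Real.sin (l * t / 2)) (Real.cos (l * t / 2) * (l / 2)) t :=
    (Real.hasDerivAt_sin _).comp t h1
  have hc : HasDerivAt (fun t => Real.cos (t / 2)) (-Real.sin (t / 2) * (1 / 2)) t :=
    (Real.hasDerivAt_cos _).comp t h2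
  have hs : HasDerivAt (fun t => Real.sin (t / 2)) (Real.cos (t / 2) * (1 / 2)) t :=
    (Real.hasDerivAt_sin _).comp t h2
  have := ((hcl.const_mul l).mul hs).sub (hsl.mul hc)
  refine this.congr_deriv ?_
  ring

private lemma g_nonneg (l x : ℝ) (hl : 0 < l) (hl1 : l ≤ 1) (hx : 0 ≤ x) (hxπ : x ≤ π) :
    0 ≤ l * Real.cos (l * x / 2) * Real.sin (x / 2) - Real.sin (l * x / 2) * Real.cos (x / 2) := by
  set g : ℝ → ℝ := fun t => l * Real.cos (l * t / 2) * Real.sin (t / 2)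
      - Real.sin (l * t / 2) * Real.cos (t / 2) with hg
  have hmono : MonotoneOn g (Set.Icc 0 π) := by
    apply monotoneOn_of_deriv_nonneg (convex_Icc 0 π)
    · exact (Continuous.sub (by continuity) (by continuity)).continuousOn
    · intro t ht
      exact (hasDerivAt_g l t).differentiableAt.differentiableWithinAt
    · intro t ht
      rw [interior_Icc] at ht
      rw [(hasDerivAt_g l t).deriv]
      have h1 : 0 ≤ Real.sin (t / 2) := by
        apply Real.sin_nonneg_of_nonneg_of_le_pi <;> [linarith [ht.1]; linarith [ht.2, Real.pi_pos]]
      have h2 : 0 ≤ Real.sin (l * t / 2) := by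
        apply Real.sin_nonneg_of_nonneg_of_le_pi
        · nlinarith [ht.1.le, hl.le]
        · nlinarith [ht.1.le, ht.2.le, Real.pi_pos]
      have h3 : 0 ≤ (1 - l ^ 2) / 2 := by nlinarith
      exact mul_nonneg h3 (mul_nonneg h2 h1)
  have h0 : g 0 = 0 := by simp [hg]
  have := hmono (Set.mem_Icc.2 ⟨le_refl 0, Real.pi_pos.le⟩) (Set.mem_Icc.2 ⟨hx, hxπ⟩) hx
  rw [h0] at this
  exact this

/-- For `λ ∈ (0,1]`, the function `x ↦ sin(λx/2)/(λ sin(x/2))` is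
monotone increasing on `(0, π/2)`. -/
theorem monotoneOn_sin_ratio (l : ℝ) (hl : l ∈ Set.Ioc (0 : ℝ) 1) :
    MonotoneOn (fun x => Real.sin (l * x / 2) / (l * Real.sin (x / 2)))
      (Set.Ioo 0 (π / 2)) := by
  obtain ⟨hl0, hl1⟩ := hl
  have hden : ∀ x ∈ Set.Ioo (0 : ℝ) (π / 2), l * Real.sin (x / 2) ≠ 0 := by
    intro x hx
    have hs : 0 < Real.sin (x / 2) := by
      apply Real.sin_pos_of_pos_of_lt_pi
      · linarith [hx.1]
      · nlinarith [hx.2, Real.pi_pos]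
    positivity
  apply monotoneOn_of_deriv_nonneg (convex_Ioo 0 (π / 2))
  · apply ContinuousOn.div
    · exact (by continuity : Continuous fun x => Real.sin (l * x / 2)).continuousOn
    · exact (by continuity : Continuous fun x => l * Real.sin (x / 2)).continuousOn
    · exact hden
  · rw [interior_Ioo]
    intro x hx
    exact (((hasDerivAt_num l x).div (hasDerivAt_den l x)
      (hden x hx)).differentiableAt).differentiableWithinAt
  · rw [interior_Ioo]
    intro x hx
    have hD := (hasDerivAt_num l x).div (hasDerivAt_den l x) (hden x hx)
    rw [show deriv (fun x => Real.sin (l * x / 2) / (l * Real.sin (x / 2))) x = _ from hD.deriv]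
    have hg := g_nonneg l x hl0 hl1 hx.1.le (by nlinarith [hx.2, Real.pi_pos])
    have hnum : Real.cos (l * x / 2) * (l / 2) * (l * Real.sin (x / 2))
        - Real.sin (l * x / 2) * (l * (Real.cos (x / 2) * (1 / 2)))
        = (l / 2) * (l * Real.cos (l * x / 2) * Real.sin (x / 2)
            - Real.sin (l * x / 2) * Real.cos (x / 2)) := by ring
    rw [hnum]
    positivity
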